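/- Let k be a field, α ∈ k nonzero, A = A_α the Gasharov–Peeva algebra. For an integer q, let T_q = A/J_q where J_q = (x₁−x₂, x₁−α^q x₃, x₁−x₄, x₅). Then T_q has dimension 2 over k, with k-basis given by the images of 1 and x₁. -/

import Mathlib

set_option synthInstance.maxHeartbeats 1000000
set_option maxHeartbeats 2000000

open MvPolynomial in
/-- The Gasharov–Peeva ideal `I_α ⊆ k[X₁,…,X₅]` (variables indexed `0,…,4`). -/
noncomputable def gpIdeal (k : Type) [Field k] (α : k) : Ideal (MvPolynomial (Fin 5) k) :=
  Ideal.span {C α * X 0 * X 2 + X 1 * X 2,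
    X 0 * X 3 + X 1 * X 3,
    X 2 ^ 2 + C α * X 0 * X 4 - X 1 * X 4,
    X 3 ^ 2 + X 0 * X 4 - X 1 * X 4,
    X 0 ^ 2, X 1 ^ 2, X 2 * X 3, X 2 * X 4, X 3 * X 4, X 4 ^ 2}

/-- The Gasharov–Peeva algebra `A = A_α = k[X₁,…,X₅]/I_α`. -/
noncomputable abbrev GP (k : Type) [Field k] (α : k) : Type :=
  MvPolynomial (Fin 5) k ⧸ gpIdeal k α

/-- `x i` : the residue class of the variable `X i` in `A_α` (so `x₁ = gpx α 0`, …,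
`x₅ = gpx α 4`). -/
noncomputable def gpx {k : Type} [Field k] (α : k) (i : Fin 5) : GP k α :=
  Ideal.Quotient.mk _ (MvPolynomial.X i)

/-- `T_q = A/J_q` where `J_q = (x₁ − x₂, x₁ − α^q x₃, x₁ − x₄, x₅)`. -/
noncomputable abbrev Tq (k : Type) [Field k] (α : k) (q : ℤ) : Type :=
  GP k α ⧸ Ideal.span {gpx α 0 - gpx α 1,
    gpx α 0 - algebraMap k (GP k α) (α ^ q) * gpx α 2,
    gpx α 0 - gpx α 3, gpx α 4}

section Aux

variable {k : Type} [Field k] (α : k) (q : ℤ)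

noncomputable def tqPi (k : Type) [Field k] (α : k) (q : ℤ) :
    MvPolynomial (Fin 5) k →ₐ[k] Tq k α q :=
  (Ideal.Quotient.mkₐ k _).comp (Ideal.Quotient.mkₐ k (gpIdeal k α))

lemma tqPi_surj (k : Type) [Field k] (α : k) (q : ℤ) :
    Function.Surjective (tqPi k α q) :=
  (Ideal.Quotient.mkₐ_surjective k _).comp (Ideal.Quotient.mkₐ_surjective k _)

open MvPolynomial

lemma tqPi_x1 : tqPi k α q (X 1) = tqPi k α q (X 0) := by
  rw [eq_comm, ← sub_eq_zero, ← map_sub]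
  show Ideal.Quotient.mk _ (Ideal.Quotient.mk _ _) = 0
  rw [map_sub, Ideal.Quotient.eq_zero_iff_mem]
  exact Ideal.subset_span (by left; rfl)

lemma tqPi_x3 : tqPi k α q (X 3) = tqPi k α q (X 0) := by
  rw [eq_comm, ← sub_eq_zero, ← map_sub]
  show Ideal.Quotient.mk _ (Ideal.Quotient.mk _ _) = 0
  rw [map_sub, Ideal.Quotient.eq_zero_iff_mem]
  exact Ideal.subset_span (by right; right; left; rfl)

lemma tqPi_x4 : tqPi k α q (X 4) = 0 := by
  show Ideal.Quotient.mk _ (Ideal.Quotient.mk _ _) = 0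
  rw [Ideal.Quotient.eq_zero_iff_mem]
  exact Ideal.subset_span (by right; right; right; rfl)

lemma tqPi_x2 (hα : α ≠ 0) : tqPi k α q (X 2) = (α ^ (-q)) • tqPi k α q (X 0) := by
  have h : tqPi k α q (X 0) = @algebraMap k (Tq k α q) _ inferInstance _ (α ^ q) * tqPi k α q (X 2) := by
    rw [← sub_eq_zero]
    have h2 : tqPi k α q (X 0) - @algebraMap k (Tq k α q) _ inferInstance _ (α ^ q) * tqPi k α q (X 2)
        = Ideal.Quotient.mkₐ k _ (gpx α 0 - algebraMap k (GP k α) (α ^ q) * gpx α 2) := by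
      rw [map_sub, map_mul, AlgHom.commutes]; rfl
    rw [h2, Ideal.Quotient.mkₐ_eq_mk, Ideal.Quotient.eq_zero_iff_mem]
    exact Ideal.subset_span (by right; left; rfl)
  rw [h, show @algebraMap k (Tq k α q) _ inferInstance _ (α ^ q) * tqPi k α q (X 2)
      = (α ^ q) • tqPi k α q (X 2) from (Algebra.smul_def _ _).symm,
    smul_smul, ← zpow_add₀ hα, neg_add_cancel, zpow_zero, one_smul]

lemma tqPi_x0sq : tqPi k α q (X 0) * tqPi k α q (X 0) = 0 := by
  rw [← map_mul]
  have h : (X 0 * X 0 : MvPolynomial (Fin 5) k) ∈ gpIdeal k α := by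
    rw [← pow_two]
    exact Ideal.subset_span (by right; right; right; right; left; rfl)
  show Ideal.Quotient.mk _ (Ideal.Quotient.mk _ _) = 0
  rw [Ideal.Quotient.eq_zero_iff_mem.mpr h, map_zero]

end Aux

section Eval

open MvPolynomial DualNumber

variable {k : Type} [Field k] (α : k) (q : ℤ)

noncomputable def gpEvalAux (α : k) (q : ℤ) : MvPolynomial (Fin 5) k →ₐ[k] DualNumber k :=
  aeval ![ε, ε, (α ^ (-q)) • ε, ε, 0]

lemma gpEvalAux_ker : ∀ a ∈ gpIdeal k α, gpEvalAux α q a = 0 := by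
  have : gpIdeal k α ≤ RingHom.ker (gpEvalAux (k := k) α q).toRingHom := by
    rw [gpIdeal, Ideal.span_le]
    rintro p (rfl | rfl | rfl | rfl | rfl | rfl | rfl | rfl | rfl | rfl) <;>
      simp [RingHom.mem_ker, gpEvalAux, mul_assoc, mul_smul_comm, smul_mul_assoc, smul_pow, sq,
        DualNumber.eps_mul_eps, smul_smul]
  exact fun a ha => this ha

noncomputable def gpEval (α : k) (q : ℤ) : GP k α →ₐ[k] DualNumber k :=
  Ideal.Quotient.liftₐ _ (gpEvalAux α q) (gpEvalAux_ker α q)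

lemma gpEval_gpx (i : Fin 5) :
    gpEval α q (gpx α i) = ![ε, ε, (α ^ (-q)) • ε, ε, (0 : DualNumber k)] i := by
  show gpEval α q (Ideal.Quotient.mk _ (X i)) = _
  rw [gpEval, Ideal.Quotient.liftₐ_apply]; erw [Ideal.Quotient.lift_mk]
  simp [gpEvalAux]

lemma gpEval_ker (hα : α ≠ 0) :
    ∀ a ∈ Ideal.span {gpx α 0 - gpx α 1,
      gpx α 0 - algebraMap k (GP k α) (α ^ q) * gpx α 2,
      gpx α 0 - gpx α 3, gpx α 4}, gpEval α q a = 0 := by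
  have : Ideal.span {gpx α 0 - gpx α 1,
      gpx α 0 - algebraMap k (GP k α) (α ^ q) * gpx α 2,
      gpx α 0 - gpx α 3, gpx α 4} ≤ RingHom.ker (gpEval (k := k) α q).toRingHom := by
    rw [Ideal.span_le]
    rintro p (rfl | rfl | rfl | rfl)
    · simp [RingHom.mem_ker, gpEval_gpx]
    · rw [SetLike.mem_coe, RingHom.mem_ker]
      simp only [AlgHom.toRingHom_eq_coe, RingHom.coe_coe, map_sub, map_mul, AlgHom.commutes]
      rw [gpEval_gpx, gpEval_gpx,
        show (![ε, ε, (α ^ (-q)) • ε, ε, (0 : DualNumber k)]) 0 = ε from rfl,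
        show (![ε, ε, (α ^ (-q)) • ε, ε, (0 : DualNumber k)]) 2 = (α ^ (-q)) • ε from rfl,
        ← Algebra.smul_def, smul_smul, ← zpow_add₀ hα, add_neg_cancel, zpow_zero, one_smul,
        sub_self]
    · simp [RingHom.mem_ker, gpEval_gpx]
    · simp [RingHom.mem_ker, gpEval_gpx]
  exact fun a ha => this ha

noncomputable def tqEval (α : k) (hα : α ≠ 0) (q : ℤ) : Tq k α q →ₐ[k] DualNumber k :=
  Ideal.Quotient.liftₐ _ (gpEval α q) (gpEval_ker α q hα)

lemma tqEval_x0 (hα : α ≠ 0) :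
    tqEval α hα q (Ideal.Quotient.mk _ (gpx α 0)) = ε := by
  rw [tqEval, Ideal.Quotient.liftₐ_apply]; erw [Ideal.Quotient.lift_mk]
  exact gpEval_gpx α q 0

end Eval

section Span

open MvPolynomial

variable {k : Type} [Field k] (α : k) (q : ℤ)

lemma tq_span_top (hα : α ≠ 0) :
    Submodule.span k {(1 : Tq k α q), tqPi k α q (X 0)} = ⊤ := by
  set M := Submodule.span k {(1 : Tq k α q), tqPi k α q (X 0)} with hM
  have h1 : (1 : Tq k α q) ∈ M := Submodule.subset_span (by left; rfl)
  have hx0 : tqPi k α q (X 0) ∈ M := Submodule.subset_span (by right; rfl)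
  have hxi : ∀ i : Fin 5, tqPi k α q (X i) ∈ M := by
    intro i
    fin_cases i
    · exact hx0
    · show tqPi k α q (X 1) ∈ M; rw [tqPi_x1]; exact hx0
    · show tqPi k α q (X 2) ∈ M; rw [tqPi_x2 α q hα]; exact M.smul_mem _ hx0
    · show tqPi k α q (X 3) ∈ M; rw [tqPi_x3]; exact hx0
    · show tqPi k α q (X 4) ∈ M; rw [tqPi_x4]; exact M.zero_mem
  have hx0i : ∀ i : Fin 5, tqPi k α q (X 0) * tqPi k α q (X i) = 0 := by
    intro i
    fin_cases i
    · exact tqPi_x0sq α q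
    · show tqPi k α q (X 0) * tqPi k α q (X 1) = 0
      rw [tqPi_x1]; exact tqPi_x0sq α q
    · show tqPi k α q (X 0) * tqPi k α q (X 2) = 0
      rw [tqPi_x2 α q hα, mul_smul_comm, tqPi_x0sq α q, smul_zero]
    · show tqPi k α q (X 0) * tqPi k α q (X 3) = 0
      rw [tqPi_x3]; exact tqPi_x0sq α q
    · show tqPi k α q (X 0) * tqPi k α q (X 4) = 0
      rw [tqPi_x4]; exact mul_zero (tqPi k α q (X 0))
  have hmul : ∀ i : Fin 5, ∀ m ∈ M, m * tqPi k α q (X i) ∈ M := by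
    intro i m hm
    obtain ⟨c, d, rfl⟩ := Submodule.mem_span_pair.mp hm
    have he : (c • (1 : Tq k α q) + d • tqPi k α q (X 0)) * tqPi k α q (X i)
        = c • tqPi k α q (X i) + d • (tqPi k α q (X 0) * tqPi k α q (X i)) := by
      rw [add_mul, smul_mul_assoc, smul_mul_assoc, one_mul (tqPi k α q (X i))]
    rw [he, hx0i i, smul_zero, add_zero]
    exact M.smul_mem _ (hxi i)
  rw [eq_top_iff]
  rintro t -
  obtain ⟨p, rfl⟩ := tqPi_surj k α q t
  induction p using MvPolynomial.induction_on with
  | C a =>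
    rw [show (C a : MvPolynomial (Fin 5) k) = algebraMap k _ a from rfl, AlgHom.commutes]
    exact Algebra.algebraMap_eq_smul_one (A := Tq k α q) a ▸ M.smul_mem a h1
  | add p r hp hr => rw [map_add]; exact M.add_mem hp hr
  | mul_X p i hp => rw [map_mul]; exact hmul i _ hp

end Span


open DualNumber in
/-- `T_q` is `2`-dimensional over `k`, with `k`-basis the images of `1` and `x₁`. -/
theorem stmt8 (k : Type) [Field k] (α : k) (hα : α ≠ 0) (q : ℤ) :
    Module.finrank k (Tq k α q) = 2 ∧
    (let b : Fin 2 → Tq k α q := ![1, Ideal.Quotient.mk _ (gpx α 0)];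
      LinearIndependent k b ∧ Submodule.span k (Set.range b) = ⊤) := by
  set b : Fin 2 → Tq k α q := ![1, Ideal.Quotient.mk _ (gpx α 0)] with hbdef
  have hli : LinearIndependent k b := by
    refine LinearIndependent.of_comp (tqEval α hα q).toLinearMap ?_
    have hc : (tqEval α hα q).toLinearMap ∘ b = ![1, ε] := by
      funext i
      fin_cases i
      · show tqEval α hα q (b 0) = (1 : DualNumber k)
        rw [show b 0 = (1 : Tq k α q) from rfl, map_one]
      · show tqEval α hα q (b 1) = ε
        rw [show b 1 = Ideal.Quotient.mk _ (gpx α 0) from rfl, tqEval_x0]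
    rw [hc]
    rw [Fintype.linearIndependent_iff]
    intro g hg
    rw [Fin.sum_univ_two] at hg
    simp only [Matrix.cons_val_zero, Matrix.cons_val_one, Matrix.head_cons] at hg
    have h0 := congrArg TrivSqZeroExt.fst hg
    have h1 := congrArg TrivSqZeroExt.snd hg
    simp only [DualNumber.eps, TrivSqZeroExt.fst_add, TrivSqZeroExt.fst_smul,
      TrivSqZeroExt.fst_one, TrivSqZeroExt.fst_inr, TrivSqZeroExt.fst_zero,
      TrivSqZeroExt.snd_add, TrivSqZeroExt.snd_smul, TrivSqZeroExt.snd_one,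
      TrivSqZeroExt.snd_inr, TrivSqZeroExt.snd_zero, smul_eq_mul, mul_one, mul_zero,
      add_zero, zero_add, smul_zero] at h0 h1
    intro i
    fin_cases i
    · exact h0
    · exact h1
  have hr : Set.range b = {(1 : Tq k α q), tqPi k α q (MvPolynomial.X 0)} := by
    rw [show b = ![1, tqPi k α q (MvPolynomial.X 0)] from rfl]
    simp only [Matrix.range_cons, Matrix.range_empty, Set.union_empty, Set.union_singleton]
    exact Set.pair_comm _ _
  have hspan : Submodule.span k (Set.range b) = ⊤ := by
    rw [hr]; exact tq_span_top α q hα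
  refine ⟨?_, hli, hspan⟩
  have B : Module.Basis (Fin 2) k (Tq k α q) := Module.Basis.mk hli (by rw [hspan])
  rw [Module.finrank_eq_card_basis B, Fintype.card_fin]
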